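/- Overspecified fixed point under conservative repair: let B : ℕ → Prop be the property B(e) ↔ ∃ x, v_bw(x, f_e(x)) > 0, assumed extensional (f_e = f_{e'} pointwise implies B(e) ↔ B(e')). Suppose the non-triviality witnesses exist (x₀, s₀, y⁺, # with s₀ ∈ S(x₀#ⁿ)\W(x₀#ⁿ) for all n, V(y⁺,s₀)=1, V(y⁺,s) ≥ 0, V(ε,s)=0), and let Φ : ℕ → ℕ be any total computable function that is conservative, i.e., ¬B(e) implies Φ(e) = e. Then there exists e* with Φ(e*) = e* and B(e*). -/

import Mathlib

variable {A : Type*} [Primcodable A] [DecidableEq A]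

/-- Beyond-warrant overspecification score. -/
def vbw (S W : List A → Finset (List A)) (V : List A → List A → ℤ)
    (x y : List A) : ℤ :=
  ∑ s ∈ S x \ W x, V y s

/-- Padded instance family `x₀ #ⁿ`. -/
def pad (x₀ : List A) (hash : A) (n : ℕ) : List A :=
  x₀ ++ List.replicate n hash

theorem stmt_17 (S W : List A → Finset (List A)) (V : List A → List A → ℤ)
    (hW : ∀ x, W x ⊆ S x)
    (hV : ∀ y s, V y s = -1 ∨ V y s = 0 ∨ V y s = 1)
    (x₀ s₀ yplus : List A) (hash : A)
    (hwit : ∀ n, s₀ ∈ S (pad x₀ hash n) \ W (pad x₀ hash n))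
    (hone : V yplus s₀ = 1)
    (hpos : ∀ s, 0 ≤ V yplus s)
    (heps : ∀ s, V [] s = 0)
    -- an effective enumeration of (total computable) pipelines:
    (fe : ℕ → List A → List A)
    -- s-m-n for the enumeration:
    (hsmn : ∀ F : ℕ → List A → List A, Computable₂ F →
      ∃ r : ℕ → ℕ, Computable r ∧ ∀ m x, fe (r m) x = F m x)
    -- Kleene recursion for the enumeration:
    (hkleene : ∀ G : ℕ → ℕ, Computable G → ∃ e, ∀ x, fe e x = fe (G e) x)
    -- extensionality of the overspecification predicate (automatic here):
    (hext : ∀ e e', (∀ x, fe e x = fe e' x) →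
      ((∃ x, 0 < vbw S W V x (fe e x)) ↔ ∃ x, 0 < vbw S W V x (fe e' x)))
    (Φ : ℕ → ℕ) (hΦ : Computable Φ)
    (hcons : ∀ e, ¬ (∃ x, 0 < vbw S W V x (fe e x)) → Φ e = e) :
    ∃ e, Φ e = e ∧ ∃ x, 0 < vbw S W V x (fe e x) := by
  -- gadget: F m x = if Φ m = m then yplus else []
  set F : ℕ → List A → List A := fun m _ => if Φ m = m then yplus else [] with hF
  have hFcomp : Computable₂ F := by
    have hc : Computable fun m : ℕ => decide (Φ m = m) :=
      (Primrec.eq (α := ℕ)).decide.to_comp.comp hΦ Computable.id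
    have := Computable.cond (hc.comp (Computable.fst (β := List A)))
      (Computable.const yplus) (Computable.const ([] : List A))
    refine this.of_eq ?_
    rintro ⟨m, x⟩
    by_cases h : Φ m = m <;> simp [F, h]
  obtain ⟨r, hr, hre⟩ := hsmn F hFcomp
  obtain ⟨e, he⟩ := hkleene r hr
  have hfe : ∀ x, fe e x = F e x := fun x => (he x).trans (hre e x)
  -- positivity on the pad when the gadget is on
  have hgad : 0 < vbw S W V (pad x₀ hash 0) yplus := by
    have hmem := hwit 0
    have hsum : V yplus s₀ ≤ ∑ s ∈ S (pad x₀ hash 0) \ W (pad x₀ hash 0), V yplus s :=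
      Finset.single_le_sum (fun s _ => hpos s) hmem
    have : (1 : ℤ) ≤ vbw S W V (pad x₀ hash 0) yplus := by
      rw [← hone]; exact hsum
    linarith
  by_cases h : Φ e = e
  · refine ⟨e, h, ⟨pad x₀ hash 0, ?_⟩⟩
    rw [hfe]
    simp only [F, if_pos h]
    exact hgad
  · exfalso
    apply h
    apply hcons
    rintro ⟨x, hx⟩
    rw [hfe, hF] at hx
    simp only [if_neg h] at hx
    have : vbw S W V x ([] : List A) = 0 := by
      unfold vbw
      exact Finset.sum_eq_zero fun s _ => heps s
    omega
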